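/- On ℂ³ with standard basis vectors e₀, e₁, e₂, let Q₀ be the orthogonal projection matrix onto the span of e₀, Q₊ the orthogonal projection onto the span of (e₀ + e₁)/√2, and Q₊' the orthogonal projection onto the span of (e₀ + e₂)/√2. Define (L, R) on matrices by: (L P, R P) = (0, 0) if P ∈ {0, Q₀, Q₊, Q₊'}; (L P, R P) = (1, 1) if P ∈ {1, 1 − Q₀, 1 − Q₊, 1 − Q₊'}; and (L P, R P) = (0, 1) otherwise. Then (L, R) is a QIVPM on ℂ³. -/

import Mathlib

open Matrix
open scoped ComplexOrder

/-- A projector on `ℂ^d`: an idempotent, self-adjoint matrix. -/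
def IsProjector {d : ℕ} (P : Matrix (Fin d) (Fin d) ℂ) : Prop :=
  P * P = P ∧ Pᴴ = P

/-- A quantum interval-valued probability measure (QIVPM) on `ℂ^d`,
given by the pair of interval-endpoint functions `L ≤ R`. -/
def IsQIVPM {d : ℕ} (L R : Matrix (Fin d) (Fin d) ℂ → ℝ) : Prop :=
  (∀ P, IsProjector P → 0 ≤ L P ∧ L P ≤ R P ∧ R P ≤ 1) ∧
  (L 0 = 0 ∧ R 0 = 0) ∧
  (L 1 = 1 ∧ R 1 = 1) ∧
  (∀ P, IsProjector P → L (1 - P) = 1 - R P ∧ R (1 - P) = 1 - L P) ∧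
  (∀ P₀ P₁, IsProjector P₀ → IsProjector P₁ → P₀ * P₁ = P₁ * P₀ →
    L P₀ + L P₁ ≤ L (P₀ + P₁ - P₀ * P₁) + L (P₀ * P₁) ∧
    R (P₀ + P₁ - P₀ * P₁) + R (P₀ * P₁) ≤ R P₀ + R P₁)

/-- A QIVPM is `δ`-deterministic if every projector's interval lies in `[0,δ]` or `[1-δ,1]`. -/
def IsDeltaDet {d : ℕ} (δ : ℝ) (L R : Matrix (Fin d) (Fin d) ℂ → ℝ) : Prop :=
  ∀ P, IsProjector P → R P ≤ δ ∨ 1 - δ ≤ L P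

/-- A QIVPM is `0`-deterministic if every projector is assigned `[0,0]` or `[1,1]`. -/
def IsZeroDet {d : ℕ} (L R : Matrix (Fin d) (Fin d) ℂ → ℝ) : Prop :=
  ∀ P, IsProjector P → (L P = 0 ∧ R P = 0) ∨ (L P = 1 ∧ R P = 1)

/-- A state (density matrix) on `ℂ^d`. -/
def IsState {d : ℕ} (ρ : Matrix (Fin d) (Fin d) ℂ) : Prop :=
  ρ.PosSemidef ∧ ρ.trace = 1

/-- Orthogonal projection onto the span of `e₀`. -/
noncomputable def Q0 : Matrix (Fin 3) (Fin 3) ℂ := !![1, 0, 0; 0, 0, 0; 0, 0, 0]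

/-- Orthogonal projection onto the span of `(e₀ + e₁)/√2`. -/
noncomputable def Qplus : Matrix (Fin 3) (Fin 3) ℂ := !![1/2, 1/2, 0; 1/2, 1/2, 0; 0, 0, 0]

/-- Orthogonal projection onto the span of `(e₀ + e₂)/√2`. -/
noncomputable def Qplus' : Matrix (Fin 3) (Fin 3) ℂ := !![1/2, 0, 1/2; 0, 0, 0; 1/2, 0, 1/2]

open Classical in
/-- Left endpoint: `0` on `{0, Q0, Q₊, Q₊'}`, `1` on their complements and `1`, else `0`. -/
noncomputable def L8 : Matrix (Fin 3) (Fin 3) ℂ → ℝ := fun P =>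
  if P = 0 ∨ P = Q0 ∨ P = Qplus ∨ P = Qplus' then 0
  else if P = 1 ∨ P = 1 - Q0 ∨ P = 1 - Qplus ∨ P = 1 - Qplus' then 1
  else 0

open Classical in
/-- Right endpoint: `0` on `{0, Q0, Q₊, Q₊'}`, `1` on their complements and `1`, else `1`. -/
noncomputable def R8 : Matrix (Fin 3) (Fin 3) ℂ → ℝ := fun P =>
  if P = 0 ∨ P = Q0 ∨ P = Qplus ∨ P = Qplus' then 0
  else if P = 1 ∨ P = 1 - Q0 ∨ P = 1 - Qplus ∨ P = 1 - Qplus' then 1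
  else 1

namespace QAux

abbrev M3 := Matrix (Fin 3) (Fin 3) ℂ

abbrev c0 (P : M3) : Prop := P = 0 ∨ P = Q0 ∨ P = Qplus ∨ P = Qplus'
abbrev c1 (P : M3) : Prop := P = 1 ∨ P = 1 - Q0 ∨ P = 1 - Qplus ∨ P = 1 - Qplus'

lemma disj {P : M3} (h0 : c0 P) (h1 : c1 P) : False := by
  rcases h0 with rfl | rfl | rfl | rfl <;> rcases h1 with h | h | h | h <;>
    (apply_fun Matrix.trace at h) <;>
    simp [Matrix.trace_fin_three, Q0, Qplus, Qplus', Matrix.trace_sub, Matrix.trace_one,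
      Matrix.one_apply, Matrix.sub_apply, Matrix.vecHead, Matrix.vecTail] at h <;> norm_num at h

lemma L8_of_c0 {P : M3} (h : c0 P) : L8 P = 0 := by unfold L8; rw [if_pos h]

lemma L8_of_c1 {P : M3} (h : c1 P) : L8 P = 1 := by
  unfold L8; rw [if_neg (fun h0 => disj h0 h), if_pos h]

lemma L8_of_not_c1 {P : M3} (h : ¬ c1 P) : L8 P = 0 := by
  unfold L8
  by_cases h0 : c0 P
  · rw [if_pos h0]
  · rw [if_neg h0, if_neg h]

lemma R8_of_c0 {P : M3} (h : c0 P) : R8 P = 0 := by unfold R8; rw [if_pos h]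

lemma R8_of_not_c0 {P : M3} (h : ¬ c0 P) : R8 P = 1 := by
  unfold R8; rw [if_neg h]; by_cases h1 : c1 P
  · rw [if_pos h1]
  · rw [if_neg h1]

lemma L8_nonneg (P : M3) : 0 ≤ L8 P := by unfold L8; split_ifs <;> norm_num

lemma R8_le_one (P : M3) : R8 P ≤ 1 := by unfold R8; split_ifs <;> norm_num

lemma c0_one_sub {P : M3} (h : c1 P) : c0 (1 - P) := by
  rcases h with rfl | rfl | rfl | rfl
  · left; abel
  · right; left; abel
  · right; right; left; abel
  · right; right; right; abel

lemma c1_one_sub {P : M3} (h : c0 P) : c1 (1 - P) := by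
  rcases h with rfl | rfl | rfl | rfl
  · left; abel
  · right; left; rfl
  · right; right; left; rfl
  · right; right; right; rfl

lemma c1_of_c0_one_sub {P : M3} (h : c0 (1 - P)) : c1 P := by
  have := c1_one_sub h; rwa [sub_sub_cancel] at this

lemma c0_of_c1_one_sub {P : M3} (h : c1 (1 - P)) : c0 P := by
  have := c0_one_sub h; rwa [sub_sub_cancel] at this
lemma Q0_idem : Q0 * Q0 = Q0 := by
  ext i j; fin_cases i <;> fin_cases j <;>
    norm_num [Q0, Matrix.mul_apply, Fin.sum_univ_three, Matrix.vecHead, Matrix.vecTail, Matrix.cons_val_two]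

lemma Qplus_idem : Qplus * Qplus = Qplus := by
  ext i j; fin_cases i <;> fin_cases j <;>
    norm_num [Qplus, Matrix.mul_apply, Fin.sum_univ_three, Matrix.vecHead, Matrix.vecTail, Matrix.cons_val_two]

lemma Qplus'_idem : Qplus' * Qplus' = Qplus' := by
  ext i j; fin_cases i <;> fin_cases j <;>
    norm_num [Qplus', Matrix.mul_apply, Fin.sum_univ_three, Matrix.vecHead, Matrix.vecTail, Matrix.cons_val_two]

lemma Q0_ne_zero : Q0 ≠ 0 := by
  intro h
  have := congrFun (congrFun h 0) 0
  norm_num [Q0] at this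

lemma Qplus_ne_zero : Qplus ≠ 0 := by
  intro h
  have := congrFun (congrFun h 0) 0
  norm_num [Qplus] at this

lemma Qplus'_ne_zero : Qplus' ≠ 0 := by
  intro h
  have := congrFun (congrFun h 0) 0
  norm_num [Qplus'] at this

lemma nc1 : Q0 * Qplus ≠ Qplus * Q0 := by
  intro h
  have := congrFun (congrFun h 0) 1
  norm_num [Q0, Qplus, Matrix.mul_apply, Fin.sum_univ_three, Matrix.vecHead, Matrix.vecTail, Matrix.cons_val_two] at this

lemma nc2 : Q0 * Qplus' ≠ Qplus' * Q0 := by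
  intro h
  have := congrFun (congrFun h 0) 2
  norm_num [Q0, Qplus', Matrix.mul_apply, Fin.sum_univ_three, Matrix.vecHead, Matrix.vecTail, Matrix.cons_val_two] at this

lemma nc3 : Qplus * Qplus' ≠ Qplus' * Qplus := by
  intro h
  have := congrFun (congrFun h 0) 1
  norm_num [Qplus, Qplus', Matrix.mul_apply, Fin.sum_univ_three, Matrix.vecHead, Matrix.vecTail, Matrix.cons_val_two] at this
lemma sub_Q0 {N : M3} (hQN : Q0 * N = N) (hNQ : N * Q0 = N) (hN : N * N = N) :
    N = 0 ∨ N = Q0 := by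
  have hr : ∀ j, N 1 j = 0 ∧ N 2 j = 0 := by
    intro j
    have h1 := congrFun (congrFun hQN 1) j
    have h2 := congrFun (congrFun hQN 2) j
    norm_num [Q0, Matrix.mul_apply, Fin.sum_univ_three, Matrix.vecHead, Matrix.vecTail, Matrix.cons_val_two] at h1 h2
    exact ⟨h1.symm, h2.symm⟩
  have hcol : ∀ i, N i 1 = 0 ∧ N i 2 = 0 := by
    intro i
    have h1 := congrFun (congrFun hNQ i) 1
    have h2 := congrFun (congrFun hNQ i) 2
    norm_num [Q0, Matrix.mul_apply, Fin.sum_univ_three, Matrix.vecHead, Matrix.vecTail, Matrix.cons_val_two] at h1 h2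
    exact ⟨h1.symm, h2.symm⟩
  have h00 := congrFun (congrFun hN 0) 0
  rw [Matrix.mul_apply, Fin.sum_univ_three] at h00
  rw [(hr 0).1, (hcol 0).1, (hr 0).2, (hcol 0).2] at h00
  have hq : N 0 0 * (N 0 0 - 1) = 0 := by ring_nf; linear_combination h00
  rcases mul_eq_zero.mp hq with h | h
  · left
    ext i j
    fin_cases i <;> fin_cases j <;>
      simp [h, (hr 0).1, (hr 0).2, (hr 1).1, (hr 1).2, (hr 2).1, (hr 2).2,
        (hcol 0).1, (hcol 0).2, Matrix.vecHead, Matrix.vecTail]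
  · right
    have h' : N 0 0 = 1 := by linear_combination h
    ext i j
    fin_cases i <;> fin_cases j <;>
      simp [Q0, h', (hr 0).1, (hr 0).2, (hr 1).1, (hr 1).2, (hr 2).1, (hr 2).2,
        (hcol 0).1, (hcol 0).2, Matrix.vecHead, Matrix.vecTail]
lemma sub_Qplus {N : M3} (hQN : Qplus * N = N) (hNQ : N * Qplus = N) (hN : N * N = N) :
    N = 0 ∨ N = Qplus := by
  have hr : ∀ j, N 1 j = N 0 j ∧ N 2 j = 0 := by
    intro j
    have h0 := congrFun (congrFun hQN 0) j
    have h2 := congrFun (congrFun hQN 2) j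
    norm_num [Qplus, Matrix.mul_apply, Fin.sum_univ_three, Matrix.vecHead, Matrix.vecTail, Matrix.cons_val_two] at h0 h2
    exact ⟨by linear_combination 2 * h0, h2.symm⟩
  have hcol : ∀ i, N i 1 = N i 0 ∧ N i 2 = 0 := by
    intro i
    have h0 := congrFun (congrFun hNQ i) 0
    have h2 := congrFun (congrFun hNQ i) 2
    norm_num [Qplus, Matrix.mul_apply, Fin.sum_univ_three, Matrix.vecHead, Matrix.vecTail, Matrix.cons_val_two] at h0 h2
    exact ⟨by linear_combination 2 * h0, h2.symm⟩
  have h00 := congrFun (congrFun hN 0) 0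
  rw [Matrix.mul_apply, Fin.sum_univ_three] at h00
  rw [(hr 0).1, (hcol 0).1, (hr 0).2, (hcol 0).2] at h00
  have hq : N 0 0 * (2 * N 0 0 - 1) = 0 := by ring_nf; linear_combination h00
  have hfill : ∀ i j, N i j = ![![N 0 0, N 0 0, 0], ![N 0 0, N 0 0, 0], ![0,0,0]] i j := by
    intro i j
    fin_cases i <;> fin_cases j <;>
      simp [(hr 0).1, (hr 0).2, (hr 1).1, (hr 1).2, (hr 2).1, (hr 2).2,
        (hcol 0).1, (hcol 0).2, (hcol 1).1, (hcol 1).2, (hcol 2).1, (hcol 2).2, Matrix.vecHead, Matrix.vecTail]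
  rcases mul_eq_zero.mp hq with h | h
  · left
    ext i j
    rw [hfill i j]
    fin_cases i <;> fin_cases j <;> simp [h, Matrix.vecHead, Matrix.vecTail]
  · right
    have h' : N 0 0 = 1/2 := by field_simp; linear_combination h
    ext i j
    rw [hfill i j]
    fin_cases i <;> fin_cases j <;> norm_num [Qplus, h', Matrix.vecHead, Matrix.vecTail]
lemma sub_Qplus' {N : M3} (hQN : Qplus' * N = N) (hNQ : N * Qplus' = N) (hN : N * N = N) :
    N = 0 ∨ N = Qplus' := by
  have hr : ∀ j, N 1 j = 0 ∧ N 2 j = N 0 j := by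
    intro j
    have h0 := congrFun (congrFun hQN 0) j
    have h1 := congrFun (congrFun hQN 1) j
    norm_num [Qplus', Matrix.mul_apply, Fin.sum_univ_three, Matrix.vecHead, Matrix.vecTail, Matrix.cons_val_two] at h0 h1
    exact ⟨h1.symm, by linear_combination 2 * h0⟩
  have hcol : ∀ i, N i 1 = 0 ∧ N i 2 = N i 0 := by
    intro i
    have h0 := congrFun (congrFun hNQ i) 0
    have h1 := congrFun (congrFun hNQ i) 1
    norm_num [Qplus', Matrix.mul_apply, Fin.sum_univ_three, Matrix.vecHead, Matrix.vecTail, Matrix.cons_val_two] at h0 h1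
    exact ⟨h1.symm, by linear_combination 2 * h0⟩
  have h00 := congrFun (congrFun hN 0) 0
  rw [Matrix.mul_apply, Fin.sum_univ_three] at h00
  rw [(hr 0).1, (hcol 0).1, (hr 0).2, (hcol 0).2] at h00
  have hq : N 0 0 * (2 * N 0 0 - 1) = 0 := by ring_nf; linear_combination h00
  have hfill : ∀ i j, N i j = ![![N 0 0, 0, N 0 0], ![0, 0, 0], ![N 0 0, 0, N 0 0]] i j := by
    intro i j
    fin_cases i <;> fin_cases j <;>
      simp [(hr 0).1, (hr 0).2, (hr 1).1, (hr 1).2, (hr 2).1, (hr 2).2,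
        (hcol 0).1, (hcol 0).2, (hcol 1).1, (hcol 1).2, (hcol 2).1, (hcol 2).2,
        Matrix.vecHead, Matrix.vecTail]
  rcases mul_eq_zero.mp hq with h | h
  · left
    ext i j
    rw [hfill i j]
    fin_cases i <;> fin_cases j <;> simp [h, Matrix.vecHead, Matrix.vecTail]
  · right
    have h' : N 0 0 = 1/2 := by field_simp; linear_combination h
    ext i j
    rw [hfill i j]
    fin_cases i <;> fin_cases j <;> norm_num [Qplus', h', Matrix.vecHead, Matrix.vecTail]
lemma proj_mul {Q P : M3} (hQ : Q * Q = Q) (hP : P * P = P) (hc : Q * P = P * Q) :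
    (Q * P) * (Q * P) = Q * P ∧ Q * (Q * P) = Q * P ∧ (Q * P) * Q = Q * P := by
  refine ⟨?_, ?_, ?_⟩
  · calc Q * P * (Q * P) = Q * (P * Q) * P := by noncomm_ring
      _ = Q * (Q * P) * P := by rw [hc]
      _ = (Q * Q) * (P * P) := by noncomm_ring
      _ = Q * P := by rw [hQ, hP]
  · calc Q * (Q * P) = (Q * Q) * P := by noncomm_ring
      _ = Q * P := by rw [hQ]
  · calc Q * P * Q = Q * (P * Q) := by noncomm_ring
      _ = Q * (Q * P) := by rw [hc]
      _ = (Q * Q) * P := by noncomm_ring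
      _ = Q * P := by rw [hQ]

lemma comm_of_one_sub {Q P : M3} (hc : (1 - Q) * P = P * (1 - Q)) : Q * P = P * Q := by
  rw [sub_mul, mul_sub, one_mul, mul_one] at hc
  exact sub_right_inj.mp hc

lemma join_case {Q P₁ : M3} (hQ : Q * Q = Q)
    (hsub : ∀ {N : M3}, Q * N = N → N * Q = N → N * N = N → N = 0 ∨ N = Q)
    (h₁ : P₁ * P₁ = P₁) (hc : (1 - Q) * P₁ = P₁ * (1 - Q)) :
    (1 - Q) + P₁ - (1 - Q) * P₁ = 1 ∨ (1 - Q) + P₁ - (1 - Q) * P₁ = 1 - Q := by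
  have hc' := comm_of_one_sub hc
  obtain ⟨hNN, hQN, hNQ⟩ := proj_mul hQ h₁ hc'
  have hJ : (1 - Q) + P₁ - (1 - Q) * P₁ = 1 - Q + Q * P₁ := by noncomm_ring
  rcases hsub hQN hNQ hNN with h | h
  · right; rw [hJ, h, add_zero]
  · left; rw [hJ, h]; abel

lemma join_c1 {P₀ P₁ : M3} (h₁ : P₁ * P₁ = P₁) (hc : P₀ * P₁ = P₁ * P₀)
    (h : c1 P₀) : c1 (P₀ + P₁ - P₀ * P₁) := by
  rcases h with rfl | rfl | rfl | rfl
  · left; rw [one_mul]; abel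
  · rcases join_case Q0_idem (fun h1 h2 h3 => sub_Q0 h1 h2 h3) h₁ hc with h | h
    · left; exact h
    · right; left; exact h
  · rcases join_case Qplus_idem (fun h1 h2 h3 => sub_Qplus h1 h2 h3) h₁ hc with h | h
    · left; exact h
    · right; right; left; exact h
  · rcases join_case Qplus'_idem (fun h1 h2 h3 => sub_Qplus' h1 h2 h3) h₁ hc with h | h
    · left; exact h
    · right; right; right; exact h

lemma comm_of_one_sub_both {Q Q' : M3} (hc : (1 - Q) * (1 - Q') = (1 - Q') * (1 - Q)) :
    Q * Q' = Q' * Q := by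
  have e1 : Q * Q' = (1 - Q) * (1 - Q') - 1 + Q + Q' := by noncomm_ring
  rw [e1, hc]; noncomm_ring

lemma one_sub_idem {Q : M3} (hQ : Q * Q = Q) : (1 - Q) * (1 - Q) = 1 - Q := by
  have : (1 - Q) * (1 - Q) = 1 - Q - Q + Q * Q := by noncomm_ring
  rw [this, hQ]; abel

lemma meet_c1 {P₀ P₁ : M3} (hc : P₀ * P₁ = P₁ * P₀)
    (h0 : c1 P₀) (h1 : c1 P₁) : c1 (P₀ * P₁) := by
  rcases h0 with rfl | rfl | rfl | rfl
  · rw [one_mul]; exact h1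
  all_goals rcases h1 with rfl | rfl | rfl | rfl
  · right; left; rw [mul_one]
  · right; left; exact one_sub_idem Q0_idem
  · exact absurd (comm_of_one_sub_both hc) nc1
  · exact absurd (comm_of_one_sub_both hc) nc2
  · right; right; left; rw [mul_one]
  · exact absurd (comm_of_one_sub_both hc) (fun h => nc1 h.symm)
  · right; right; left; exact one_sub_idem Qplus_idem
  · exact absurd (comm_of_one_sub_both hc) nc3
  · right; right; right; rw [mul_one]
  · exact absurd (comm_of_one_sub_both hc) (fun h => nc2 h.symm)
  · exact absurd (comm_of_one_sub_both hc) (fun h => nc3 h.symm)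
  · right; right; right; exact one_sub_idem Qplus'_idem
lemma R_key_case {Q P₁ : M3} (hQmem : c0 Q) (hQ : Q * Q = Q) (hQ0 : Q ≠ 0)
    (hsub : ∀ {N : M3}, Q * N = N → N * Q = N → N * N = N → N = 0 ∨ N = Q)
    (hnc : ∀ Q' : M3, (Q' = Q0 ∨ Q' = Qplus ∨ Q' = Qplus') → Q' ≠ Q → Q * Q' ≠ Q' * Q)
    (h₁ : P₁ * P₁ = P₁) (hc : Q * P₁ = P₁ * Q) :
    R8 (Q + P₁ - Q * P₁) + R8 (Q * P₁) ≤ R8 Q + R8 P₁ := by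
  obtain ⟨hNN, hQN, hNQ⟩ := proj_mul hQ h₁ hc
  rcases hsub hQN hNQ hNN with h | h
  · have hJ : Q + P₁ - Q * P₁ = Q + P₁ := by rw [h, sub_zero]
    rw [hJ, h, R8_of_c0 (Or.inl rfl), R8_of_c0 hQmem, add_zero, zero_add]
    by_cases hP : c0 P₁
    · rcases hP with rfl | hP
      · rw [add_zero, R8_of_c0 hQmem, R8_of_c0 (Or.inl rfl)]
      · by_cases hPQ : P₁ = Q
        · exfalso; rw [hPQ, hQ] at h; exact hQ0 h
        · exact absurd hc (hnc P₁ hP hPQ)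
    · rw [R8_of_not_c0 hP]; exact R8_le_one _
  · have hJ : Q + P₁ - Q * P₁ = P₁ := by rw [h]; abel
    rw [hJ, h]
    exact le_of_eq (add_comm _ _)

lemma R_key {P₀ P₁ : M3} (h₁ : P₁ * P₁ = P₁) (hc : P₀ * P₁ = P₁ * P₀) (h : c0 P₀) :
    R8 (P₀ + P₁ - P₀ * P₁) + R8 (P₀ * P₁) ≤ R8 P₀ + R8 P₁ := by
  rcases h with rfl | rfl | rfl | rfl
  · rw [zero_mul, sub_zero, zero_add]
    exact le_of_eq (add_comm _ _)
  · exact R_key_case (Or.inr (Or.inl rfl)) Q0_idem Q0_ne_zero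
      (fun h1 h2 h3 => sub_Q0 h1 h2 h3)
      (by rintro Q' (rfl | rfl | rfl) hne
          · exact absurd rfl hne
          · exact nc1
          · exact nc2) h₁ hc
  · exact R_key_case (Or.inr (Or.inr (Or.inl rfl))) Qplus_idem Qplus_ne_zero
      (fun h1 h2 h3 => sub_Qplus h1 h2 h3)
      (by rintro Q' (rfl | rfl | rfl) hne
          · exact fun h => nc1 h.symm
          · exact absurd rfl hne
          · exact nc3) h₁ hc
  · exact R_key_case (Or.inr (Or.inr (Or.inr rfl))) Qplus'_idem Qplus'_ne_zero
      (fun h1 h2 h3 => sub_Qplus' h1 h2 h3)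
      (by rintro Q' (rfl | rfl | rfl) hne
          · exact fun h => nc2 h.symm
          · exact fun h => nc3 h.symm
          · exact absurd rfl hne) h₁ hc
end QAux

open QAux in
/-- The three-valued assignment `(L8, R8)` is a QIVPM on `ℂ³`. -/
theorem L8_R8_is_QIVPM : IsQIVPM L8 R8 := by
  refine ⟨?_, ?_, ?_, ?_, ?_⟩
  · intro P _
    refine ⟨L8_nonneg P, ?_, R8_le_one P⟩
    unfold L8 R8; split_ifs <;> norm_num
  · exact ⟨L8_of_c0 (Or.inl rfl), R8_of_c0 (Or.inl rfl)⟩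
  · constructor
    · exact L8_of_c1 (Or.inl rfl)
    · exact R8_of_not_c0 (fun h0 => disj h0 (Or.inl rfl))
  · intro P _
    by_cases h0 : c0 P
    · rw [L8_of_c1 (c1_one_sub h0), R8_of_c0 h0,
        R8_of_not_c0 (fun hx => disj hx (c1_one_sub h0)), L8_of_c0 h0]
      norm_num
    · by_cases h1 : c1 P
      · rw [L8_of_c0 (c0_one_sub h1), R8_of_not_c0 h0, R8_of_c0 (c0_one_sub h1), L8_of_c1 h1]
        norm_num
      · rw [L8_of_not_c1 (fun hx => h0 (c0_of_c1_one_sub hx)), R8_of_not_c0 h0,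
          R8_of_not_c0 (fun hx => h1 (c1_of_c0_one_sub hx)), L8_of_not_c1 h1]
        norm_num
  · intro P₀ P₁ h₀ h₁ hc
    constructor
    · by_cases hc1₀ : c1 P₀
      · have hJ := join_c1 h₁.1 hc hc1₀
        by_cases hc1₁ : c1 P₁
        · rw [L8_of_c1 hc1₀, L8_of_c1 hc1₁, L8_of_c1 hJ, L8_of_c1 (meet_c1 hc hc1₀ hc1₁)]
        · rw [L8_of_c1 hc1₀, L8_of_not_c1 hc1₁, L8_of_c1 hJ]
          have := L8_nonneg (P₀ * P₁); linarith
      · by_cases hc1₁ : c1 P₁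
        · have hJ := join_c1 h₀.1 hc.symm hc1₁
          have hJeq : P₁ + P₀ - P₁ * P₀ = P₀ + P₁ - P₀ * P₁ := by rw [hc]; abel
          rw [hJeq] at hJ
          rw [L8_of_not_c1 hc1₀, L8_of_c1 hc1₁, L8_of_c1 hJ]
          have := L8_nonneg (P₀ * P₁); linarith
        · rw [L8_of_not_c1 hc1₀, L8_of_not_c1 hc1₁]
          have := L8_nonneg (P₀ + P₁ - P₀ * P₁)
          have := L8_nonneg (P₀ * P₁); linarith
    · by_cases hc0₀ : c0 P₀
      · exact R_key h₁.1 hc hc0₀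
      · by_cases hc0₁ : c0 P₁
        · have hkey := R_key h₀.1 hc.symm hc0₁
          have hJeq : P₁ + P₀ - P₁ * P₀ = P₀ + P₁ - P₀ * P₁ := by rw [hc]; abel
          rw [hJeq, ← hc] at hkey
          linarith
        · rw [R8_of_not_c0 hc0₀, R8_of_not_c0 hc0₁]
          have := R8_le_one (P₀ + P₁ - P₀ * P₁)
          have := R8_le_one (P₀ * P₁); linarith
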